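/- Let n > 1 be an integer. For all integers A and B with 2^(n-1) < A < 2^n and 2^(n-1) < B < 2^n, it holds that A / 2^(n-1) ≠ ((B + 1/2) / 2^(n-1))². Equivalently, A / 2^(n-1) ≠ ((B + 1/2)·(B + 1/2)) / 4^(n-1), so no precision-n floating-point significand in the binade [1,2) is the square of a midpoint between consecutive precision-n significands. -/

import Mathlib

/-- No precision-`n` floating-point significand `A / 2^(n-1)` in the binade `[1,2)`
(with `A` interior, hence not a power of two) is the square of a midpoint
`(B + 1/2) / 2^(n-1)` between consecutive precision-`n` significands. -/
theorem sqrt_not_midpoint_first_binade (n : ℕ) (hn : 1 < n) (A B : ℤ)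
    (hA1 : 2 ^ (n - 1) < A) (hA2 : A < 2 ^ n)
    (hB1 : 2 ^ (n - 1) < B) (hB2 : B < 2 ^ n) :
    (A : ℝ) / 2 ^ (n - 1) ≠ (((B : ℝ) + 1 / 2) / 2 ^ (n - 1)) ^ 2 := by
  intro h
  have h2 : (2:ℝ)^(n-1) ≠ 0 := by positivity
  have key : (4 * A * 2^(n-1) : ℝ) = ((2*B+1)^2 : ℝ) := by
    field_simp at h
    push_cast
    apply mul_right_cancel₀ h2
    linear_combination (2:ℝ)^(n-1) * h
  have keyZ : (4 * A * 2^(n-1) : ℤ) = (2*B+1)^2 := by exact_mod_cast key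
  have he : Even (4 * A * 2^(n-1) : ℤ) := ⟨2 * A * 2^(n-1), by ring⟩
  have ho : Odd ((2*B+1)^2 : ℤ) := (odd_two_mul_add_one B).pow
  rw [keyZ] at he
  exact (Int.not_odd_iff_even.mpr he) ho
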